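/- Let N be a network and I an influence specification for N. Then N is injective over K_g(N,I) — i.e., N is injective over K_g(N)[v] for every kinetic order v with I(v) = I — if and only if I is sign-nonsingular (SNS). -/

import Mathlib

noncomputable section

namespace CRN

variable {n m : ℕ}

/-- The orthogonal complement of a subspace of `Fin n → ℝ` with respect to the
standard scalar product. -/
def orthComp (F : Submodule ℝ (Fin n → ℝ)) : Submodule ℝ (Fin n → ℝ) where
  carrier := {w | ∀ v ∈ F, ∑ i, w i * v i = 0}
  add_mem' := by
    intro a b ha hb v hv
    have h1 := ha v hv
    have h2 := hb v hv
    have key : ∀ i, (a + b) i * v i = a i * v i + b i * v i := fun i => by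
      simp [add_mul]
    calc ∑ i, (a + b) i * v i
        = ∑ i, (a i * v i + b i * v i) := Finset.sum_congr rfl (fun i _ => key i)
      _ = (∑ i, a i * v i) + ∑ i, b i * v i := Finset.sum_add_distrib
      _ = 0 := by rw [h1, h2, add_zero]
  zero_mem' := by
    intro v hv
    simp
  smul_mem' := by
    intro t a ha v hv
    have h1 := ha v hv
    simp only [Set.mem_setOf_eq, Pi.smul_apply, smul_eq_mul]
    calc ∑ i, t * a i * v i
        = t * ∑ i, a i * v i := by
          rw [Finset.mul_sum]
          exact Finset.sum_congr rfl fun i _ => (mul_assoc _ _ _)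
      _ = 0 := by rw [h1, mul_zero]

/-- `ω` is a reduced basis of `F^⊥`: it is a basis of the orthogonal complement of `F`,
`ω i` has `i`-th coordinate `1`, and `j`-th coordinate `0` for every `j < d`, `j ≠ i`. -/
def IsReducedBasis (d : ℕ) (F : Submodule ℝ (Fin n → ℝ)) (ω : Fin d → Fin n → ℝ) : Prop :=
  (∀ i, ω i ∈ orthComp F) ∧
  Submodule.span ℝ (Set.range ω) = orthComp F ∧
  LinearIndependent ℝ ω ∧
  (∀ (i : Fin d) (j : Fin n), (j : ℕ) = (i : ℕ) → ω i j = 1) ∧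
  (∀ (i : Fin d) (j : Fin n), (j : ℕ) < d → (j : ℕ) ≠ (i : ℕ) → ω i j = 0)

/-- The matrix whose top `d` rows are `ω` and whose remaining rows agree with `M`. -/
def tildeMat (d : ℕ) (ω : Fin d → Fin n → ℝ) (M : Matrix (Fin n) (Fin n) ℝ) :
    Matrix (Fin n) (Fin n) ℝ :=
  Matrix.of fun i j => if h : (i : ℕ) < d then ω ⟨(i : ℕ), h⟩ j else M i j

/-- The stoichiometric matrix: `r`-th column is `y' r - y r`. -/
def stoich (y y' : Fin m → Fin n → ℝ) : Matrix (Fin n) (Fin m) ℝ :=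
  Matrix.of fun i r => y' r i - y r i

/-- The stoichiometric subspace: the span of the reaction vectors `y' r - y r`. -/
def stoichSpan (y y' : Fin m → Fin n → ℝ) : Submodule ℝ (Fin n → ℝ) :=
  Submodule.span ℝ (Set.range fun r => (fun i => y' r i - y r i))

/-- The matrix whose `r`-th row is the kinetic-order vector `v r`. -/
def Zmat (v : Fin m → Fin n → ℝ) : Matrix (Fin m) (Fin n) ℝ :=
  Matrix.of fun r i => v r i

/-- The Jacobian matrix of `f` at `c`. -/
def jac (f : (Fin n → ℝ) → Fin n → ℝ) (c : Fin n → ℝ) : Matrix (Fin n) (Fin n) ℝ :=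
  Matrix.of fun i j => fderiv ℝ (fun x => f x i) c (Pi.single j 1)

/-- The species formation rate function of a kinetics `K`. -/
def specForm (y y' : Fin m → Fin n → ℝ) (K : Fin m → (Fin n → ℝ) → ℝ) (c : Fin n → ℝ) :
    Fin n → ℝ :=
  fun i => ∑ r, K r c * (y' r i - y r i)

/-- The power-law rate functions with rate vector `κ` and kinetic order `v`. -/
def powerLaw (κ : Fin m → ℝ) (v : Fin m → Fin n → ℝ) : Fin m → (Fin n → ℝ) → ℝ :=
  fun r c => κ r * ∏ j, c j ^ v r j

/-- The power-law species formation rate function. -/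
def plf (y y' : Fin m → Fin n → ℝ) (κ : Fin m → ℝ) (v : Fin m → Fin n → ℝ) (c : Fin n → ℝ) :
    Fin n → ℝ :=
  fun i => ∑ r, κ r * (∏ j, c j ^ v r j) * (y' r i - y r i)

/-- The extended rate function associated with a reduced basis `ω` and `f`. -/
def tildeF (d : ℕ) (ω : Fin d → Fin n → ℝ) (f : (Fin n → ℝ) → Fin n → ℝ) (c : Fin n → ℝ) :
    Fin n → ℝ :=
  fun i => if h : (i : ℕ) < d then ∑ j, ω ⟨(i : ℕ), h⟩ j * c j else f c i

/-- The extended rate function with the bottom `s` components negated. -/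
def hatF (d : ℕ) (ω : Fin d → Fin n → ℝ) (f : (Fin n → ℝ) → Fin n → ℝ) (c : Fin n → ℝ) :
    Fin n → ℝ :=
  fun i => if h : (i : ℕ) < d then ∑ j, ω ⟨(i : ℕ), h⟩ j * c j else -(f c i)

/-- Membership in the positive orthant. -/
def Pos (c : Fin n → ℝ) : Prop := ∀ i, 0 < c i

/-- The network is injective over the power-law kinetics with fixed kinetic order `v`. -/
def InjOverPL (y y' : Fin m → Fin n → ℝ) (v : Fin m → Fin n → ℝ) : Prop :=
  ∀ κ : Fin m → ℝ, (∀ r, 0 < κ r) → ∀ a b : Fin n → ℝ, Pos a → Pos b → a ≠ b →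
    a - b ∈ stoichSpan y y' → plf y y' κ v a ≠ plf y y' κ v b

/-- An influence specification takes values in `{-1, 0, 1}`. -/
def IsInfluence (I : Fin m → Fin n → ℝ) : Prop := ∀ r i, I r i = -1 ∨ I r i = 0 ∨ I r i = 1

/-- The influence specification associated with a kinetic order `v`. -/
def infOf (v : Fin m → Fin n → ℝ) : Fin m → Fin n → ℝ := fun r i => Real.sign (v r i)

/-- `v ∈ Σ(I)`: the kinetic order `v` has associated influence specification `I`. -/
def InSigma (I : Fin m → Fin n → ℝ) (v : Fin m → Fin n → ℝ) : Prop :=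
  ∀ r i, Real.sign (v r i) = I r i

/-- The partial order `I' ≼ I` on influence specifications. -/
def Preceq (I' I : Fin m → Fin n → ℝ) : Prop :=
  ∀ r i, (I' r i = 1 → I r i = 1) ∧ (I' r i = -1 → I r i = -1)

/-- The matrix `M̃(v)`: top `d` rows `ω`, bottom rows from `A ⬝ Z(v)`. -/
def Mt (y y' : Fin m → Fin n → ℝ) (d : ℕ) (ω : Fin d → Fin n → ℝ)
    (v : Fin m → Fin n → ℝ) : Matrix (Fin n) (Fin n) ℝ :=
  tildeMat d ω (stoich y y' * Zmat v)

/-- The influence specification `I` has a signed determinant. -/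
def SignedDet (y y' : Fin m → Fin n → ℝ) (d : ℕ) (ω : Fin d → Fin n → ℝ)
    (I : Fin m → Fin n → ℝ) : Prop :=
  ∀ v w, InSigma I v → InSigma I w →
    Real.sign (Mt y y' d ω v).det = Real.sign (Mt y y' d ω w).det

/-- The influence specification `I` is sign-nonsingular (SNS). -/
def IsSNS (y y' : Fin m → Fin n → ℝ) (d : ℕ) (ω : Fin d → Fin n → ℝ)
    (I : Fin m → Fin n → ℝ) : Prop :=
  SignedDet y y' d ω I ∧ ∀ v, InSigma I v → (Mt y y' d ω v).det ≠ 0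

/-- `Ω` is an admissible kinetics domain: `ℝ^n_{>0} ⊆ Ω ⊆ ℝ^n_{≥0}`. -/
def KinDom (Ω : Set (Fin n → ℝ)) : Prop :=
  {c : Fin n → ℝ | ∀ i, 0 < c i} ⊆ Ω ∧ Ω ⊆ {c : Fin n → ℝ | ∀ i, 0 ≤ c i}

/-- The rate functions are nonnegative on the domain. -/
def KinNonneg (Ω : Set (Fin n → ℝ)) (K : Fin m → (Fin n → ℝ) → ℝ) : Prop :=
  ∀ r, ∀ c ∈ Ω, 0 ≤ K r c

/-- `I_r^+ ⊆ supp c`. -/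
def PosSupp (I : Fin m → Fin n → ℝ) (r : Fin m) (c : Fin n → ℝ) : Prop :=
  ∀ i, I r i = 1 → c i ≠ 0

/-- The kinetics `K` respects the influence specification `I`. -/
def Respects (Ω : Set (Fin n → ℝ)) (K : Fin m → (Fin n → ℝ) → ℝ)
    (I : Fin m → Fin n → ℝ) : Prop :=
  ∀ c ∈ Ω, ∀ r, (0 < K r c ↔ PosSupp I r c)

/-- The kinetics `K` is strictly monotonic with respect to `I`. -/
def StrictlyMonotonic (Ω : Set (Fin n → ℝ)) (K : Fin m → (Fin n → ℝ) → ℝ)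
    (I : Fin m → Fin n → ℝ) : Prop :=
  Respects Ω K I ∧
  ∀ (r : Fin m) (c d : Fin n → ℝ), c ∈ Ω → d ∈ Ω → PosSupp I r c → PosSupp I r d →
    ∀ i, (∀ j, j ≠ i → c j = d j) →
      ((I r i = 1 → c i < d i → K r c < K r d) ∧
       (I r i = -1 → c i < d i → K r d < K r c) ∧
       (I r i = 0 → K r c = K r d))

/-- The kinetics `K` is differentiable with respect to `I`. -/
def DiffWrt (Ω : Set (Fin n → ℝ)) (K : Fin m → (Fin n → ℝ) → ℝ)
    (I : Fin m → Fin n → ℝ) : Prop :=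
  Respects Ω K I ∧
  (∀ r, ∀ c ∈ Ω, ContinuousWithinAt (K r) Ω c) ∧
  (∀ (r : Fin m) (c : Fin n → ℝ), (∀ i, 0 < c i) → DifferentiableAt ℝ (K r) c) ∧
  (∀ (r : Fin m) (c : Fin n → ℝ), (∀ i, 0 < c i) → ∀ i,
     Real.sign (fderiv ℝ (K r) c (Pi.single i 1)) = I r i)

/-- `a` and `b` are non-overlapping with respect to `I`. -/
def NonOverlap (I : Fin m → Fin n → ℝ) (a b : Fin n → ℝ) : Prop :=
  ∀ r, ¬ PosSupp I r a → PosSupp I r b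

/-- The kinetics `K` is weakly monotonic with respect to `I`. -/
def WeaklyMonotonic (y : Fin m → Fin n → ℝ) (Ω : Set (Fin n → ℝ))
    (K : Fin m → (Fin n → ℝ) → ℝ) (I : Fin m → Fin n → ℝ) : Prop :=
  ∀ a ∈ Ω, ∀ b ∈ Ω, NonOverlap I a b → ∀ r,
    (K r b < K r a → ∃ i, Real.sign (a i - b i) = I r i ∧ I r i ≠ 0) ∧
    (K r a = K r b →
      ((∀ i, y r i ≠ 0 → a i = b i) ∨
        ∃ i j, i ≠ j ∧ Real.sign (a i - b i) = I r i ∧ I r i ≠ 0 ∧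
          Real.sign (a j - b j) = -(I r j) ∧ I r j ≠ 0))

/-- A square real matrix is a P-matrix: all principal minors are positive. -/
def IsPMatrix {N : ℕ} (M : Matrix (Fin N) (Fin N) ℝ) : Prop :=
  ∀ J : Finset (Fin N),
    0 < (M.submatrix (fun i : {x // x ∈ J} => (i : Fin N))
          (fun j : {x // x ∈ J} => (j : Fin N))).det

/-- The minor `det(A_{J,C})` of the stoichiometric matrix. -/
def subDetA (y y' : Fin m → Fin n → ℝ) (s : ℕ) (J : Finset (Fin n)) (C : Finset (Fin m))
    (hJ : J.card = s) (hC : C.card = s) : ℝ :=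
  ((stoich y y').submatrix (fun a => (J.orderIsoOfFin hJ a).1)
    (fun b => (C.orderIsoOfFin hC b).1)).det

/-- The minor `det(Z(v)_{C,J})`. -/
def subDetZ (v : Fin m → Fin n → ℝ) (s : ℕ) (C : Finset (Fin m)) (J : Finset (Fin n))
    (hC : C.card = s) (hJ : J.card = s) : ℝ :=
  ((Zmat v).submatrix (fun a => (C.orderIsoOfFin hC a).1)
    (fun b => (J.orderIsoOfFin hJ b).1)).det

/-- The Hill-type species formation rate function. -/
def hillf (y y' : Fin m → Fin n → ℝ) (κ : Fin m → ℝ) (δ v : Fin m → Fin n → ℝ)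
    (c : Fin n → ℝ) : Fin n → ℝ :=
  fun i => ∑ r, κ r * (∏ j, (c j ^ v r j) / (δ r j + c j ^ v r j)) * (y' r i - y r i)


lemma seg_neg {x y t : ℝ} (hx : x < 0) (hy : y < 0) (ht0 : 0 ≤ t) (ht1 : t ≤ 1) :
    (1 - t) * x + t * y < 0 := by
  rcases ht0.eq_or_lt with rfl | htpos
  · simpa using hx
  · have h1 : t * y < 0 := mul_neg_of_pos_of_neg htpos hy
    have h2 : (1 - t) * x ≤ 0 := mul_nonpos_of_nonneg_of_nonpos (by linarith) hx.le
    linarith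

lemma seg_pos {x y t : ℝ} (hx : 0 < x) (hy : 0 < y) (ht0 : 0 ≤ t) (ht1 : t ≤ 1) :
    0 < (1 - t) * x + t * y := by
  have := seg_neg (neg_neg_iff_pos.mpr hx : -x < 0) (by linarith : -y < 0) ht0 ht1
  nlinarith

lemma sign_pos_mul (c x : ℝ) (hc : 0 < c) : Real.sign (c * x) = Real.sign x := by
  rcases lt_trichotomy x 0 with h | h | h
  · rw [Real.sign_of_neg h, Real.sign_of_neg (by nlinarith)]
  · simp [h]
  · rw [Real.sign_of_pos h, Real.sign_of_pos (by nlinarith)]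

lemma neg_of_sign_eq {x y : ℝ} (h : Real.sign x = Real.sign y) (hx : x < 0) : y < 0 := by
  rcases lt_trichotomy y 0 with h' | h' | h'
  · exact h'
  · rw [Real.sign_of_neg hx, h', Real.sign_zero] at h; norm_num at h
  · rw [Real.sign_of_neg hx, Real.sign_of_pos h'] at h; norm_num at h

lemma pos_of_sign_eq {x y : ℝ} (h : Real.sign x = Real.sign y) (hx : 0 < x) : 0 < y := by
  rcases lt_trichotomy y 0 with h' | h' | h'
  · rw [Real.sign_of_pos hx, Real.sign_of_neg h'] at h; norm_num at h
  · rw [Real.sign_of_pos hx, h', Real.sign_zero] at h; norm_num at h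
  · exact h'

lemma zero_of_sign_eq {x y : ℝ} (h : Real.sign x = Real.sign y) (hx : x = 0) : y = 0 := by
  subst hx; rw [Real.sign_zero] at h; exact Real.sign_eq_zero_iff.mp h.symm

lemma sign_seg {x y : ℝ} (h : Real.sign x = Real.sign y) {t : ℝ} (ht0 : 0 ≤ t) (ht1 : t ≤ 1) :
    Real.sign ((1 - t) * x + t * y) = Real.sign x := by
  rcases lt_trichotomy x 0 with hx | hx | hx
  · have hy := neg_of_sign_eq h hx
    rw [Real.sign_of_neg hx, Real.sign_of_neg (seg_neg hx hy ht0 ht1)]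
  · have hy := zero_of_sign_eq h hx
    simp [hx, hy]
  · have hy := pos_of_sign_eq h hx
    rw [Real.sign_of_pos hx, Real.sign_of_pos (seg_pos hx hy ht0 ht1)]

/-- `(exp x - 1)/x`, extended by `1` at `0`. -/
def hfun (x : ℝ) : ℝ := if x = 0 then 1 else (Real.exp x - 1) / x

lemma hfun_pos (x : ℝ) : 0 < hfun x := by
  unfold hfun
  split_ifs with h
  · norm_num
  · rcases lt_trichotomy x 0 with h' | h' | h'
    · have : Real.exp x < 1 := by
        rw [← Real.exp_zero]; exact Real.exp_lt_exp.mpr h'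
      exact div_pos_of_neg_of_neg (by linarith) h'
    · exact absurd h' h
    · have : 1 < Real.exp x := by
        rw [← Real.exp_zero]; exact Real.exp_lt_exp.mpr h'
      exact div_pos (by linarith) h'

lemma exp_sub_one_eq (x : ℝ) : Real.exp x - 1 = x * hfun x := by
  unfold hfun
  split_ifs with h
  · simp [h]
  · field_simp

lemma prod_rpow_eq_exp {n : ℕ} {a : Fin n → ℝ} (ha : ∀ i, 0 < a i) (w : Fin n → ℝ) :
    (∏ j, a j ^ w j) = Real.exp (∑ j, w j * Real.log (a j)) := by
  rw [Real.exp_sum]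
  exact Finset.prod_congr rfl fun j _ => by
    rw [Real.rpow_def_of_pos (ha j), mul_comm]
lemma dot_linear {n : ℕ} (ν : Fin n → ℝ) :
    ∃ φ : (Fin n → ℝ) →ₗ[ℝ] ℝ, ∀ w, φ w = ∑ j, w j * ν j := by
  refine ⟨{ toFun := fun w => ∑ j, w j * ν j, map_add' := ?_, map_smul' := ?_ }, fun w => rfl⟩
  · intro a b
    simp [add_mul, Finset.sum_add_distrib]
  · intro c a
    simp [Finset.mul_sum, mul_assoc]

lemma mem_of_orth_basis {n d : ℕ} {F : Submodule ℝ (Fin n → ℝ)} {ω : Fin d → Fin n → ℝ}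
    (hspan : Submodule.span ℝ (Set.range ω) = orthComp F)
    {ν : Fin n → ℝ} (hν : ∀ i, ∑ j, ω i j * ν j = 0) : ν ∈ F := by
  classical
  let L : (Fin n → ℝ) ≃ₗ[ℝ] EuclideanSpace ℝ (Fin n) :=
    (WithLp.linearEquiv 2 ℝ (Fin n → ℝ)).symm
  have hLapp : ∀ (w : Fin n → ℝ) (i : Fin n), L w i = w i := fun w i => rfl
  have hLsymm : ∀ (u : EuclideanSpace ℝ (Fin n)) (i : Fin n), (L.symm u) i = u i :=
    fun u i => rfl
  set G : Submodule ℝ (EuclideanSpace ℝ (Fin n)) := F.map (L : (Fin n → ℝ) →ₗ[ℝ] EuclideanSpace ℝ (Fin n)) with hG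
  have hinner : ∀ (x y : EuclideanSpace ℝ (Fin n)),
      (inner ℝ x y : ℝ) = ∑ i, x i * y i := by
    intro x y
    simp [PiLp.inner_apply, RCLike.inner_apply, mul_comm]
  have key : L ν ∈ Gᗮᗮ := by
    rw [Submodule.mem_orthogonal]
    intro u hu
    -- u ∈ Gᗮ, so L.symm u ∈ orthComp F
    have husymm : L.symm u ∈ orthComp F := by
      intro v hv
      have := (Submodule.mem_orthogonal G u).mp hu (L v) ⟨v, hv, rfl⟩
      rw [hinner] at this
      calc ∑ i, (L.symm u) i * v i = ∑ i, (L v) i * u i := by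
            refine Finset.sum_congr rfl fun i _ => ?_
            rw [hLsymm, hLapp, mul_comm]
        _ = 0 := this
    rw [← hspan] at husymm
    obtain ⟨φ, hφ⟩ := dot_linear ν
    have hker : ∀ w ∈ Submodule.span ℝ (Set.range ω), φ w = 0 := by
      intro w hw
      induction hw using Submodule.span_induction with
      | mem x hx => obtain ⟨i, rfl⟩ := hx; rw [hφ]; exact hν i
      | zero => simp
      | add x y _ _ hx hy => rw [map_add, hx, hy, add_zero]
      | smul c x _ hx => rw [map_smul, hx, smul_zero]
    have h0 : φ (L.symm u) = 0 := hker _ husymm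
    rw [hφ] at h0
    rw [hinner]
    calc ∑ i, u i * (L ν) i = ∑ i, (L.symm u) i * ν i := by
          refine Finset.sum_congr rfl fun i _ => ?_
          rw [hLsymm, hLapp]
      _ = 0 := h0
  rw [Submodule.orthogonal_orthogonal] at key
  obtain ⟨w, hw, hweq⟩ := key
  have : w = ν := by
    funext i
    have := congrFun (congrArg (fun (z : EuclideanSpace ℝ (Fin n)) => (z : Fin n → ℝ)) hweq) i
    exact this
  rwa [← this]
lemma Mt_mulVec {n m : ℕ} (y y' : Fin m → Fin n → ℝ) (d : ℕ) (ω : Fin d → Fin n → ℝ)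
    (v : Fin m → Fin n → ℝ) (ν : Fin n → ℝ) (i : Fin n) :
    (Mt y y' d ω v).mulVec ν i =
      if h : (i : ℕ) < d then ∑ j, ω ⟨(i : ℕ), h⟩ j * ν j
      else ∑ r, (∑ j, v r j * ν j) * (y' r i - y r i) := by
  by_cases h : (i : ℕ) < d
  · rw [dif_pos h]
    simp only [Matrix.mulVec, dotProduct, Mt, tildeMat, Matrix.of_apply, dif_pos h]
  · rw [dif_neg h]
    simp only [Matrix.mulVec, dotProduct, Mt, tildeMat, Matrix.of_apply, dif_neg h,
      Matrix.mul_apply, stoich, Zmat]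
    calc ∑ x, (∑ r, (y' r i - y r i) * v r x) * ν x
        = ∑ x, ∑ r, (y' r i - y r i) * v r x * ν x := by
          exact Finset.sum_congr rfl fun x _ => Finset.sum_mul _ _ _
      _ = ∑ r, ∑ x, (y' r i - y r i) * v r x * ν x := Finset.sum_comm
      _ = ∑ r, (∑ j, v r j * ν j) * (y' r i - y r i) := by
          refine Finset.sum_congr rfl fun r _ => ?_
          rw [Finset.sum_mul]
          exact Finset.sum_congr rfl fun j _ => by ring

/-- If a vector in the stoichiometric span vanishes on the bottom `s` coordinates,
it vanishes everywhere. -/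
lemma AZ_vanish {n m : ℕ} {y y' : Fin m → Fin n → ℝ} {d : ℕ}
    {ω : Fin d → Fin n → ℝ} (hω : IsReducedBasis d (stoichSpan y y') ω)
    (c : Fin m → ℝ)
    (hbot : ∀ i : Fin n, d ≤ (i : ℕ) → ∑ r, c r * (y' r i - y r i) = 0)
    (i : Fin n) : ∑ r, c r * (y' r i - y r i) = 0 := by
  by_cases h : (i : ℕ) < d
  · set x : Fin n → ℝ := fun j => ∑ r, c r * (y' r j - y r j) with hx
    set i' : Fin d := ⟨(i : ℕ), h⟩ with hi'
    have hxj : ∀ j, x j = ∑ r, c r * (y' r j - y r j) := fun j => rfl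
    have horth : ∑ j, ω i' j * x j = 0 := by
      have heq : ∑ j, ω i' j * x j = ∑ r, c r * (∑ j, ω i' j * (y' r j - y r j)) := by
        simp only [hxj, Finset.mul_sum]
        rw [Finset.sum_comm]
        exact Finset.sum_congr rfl fun r _ => Finset.sum_congr rfl fun j _ => by ring
      rw [heq]
      refine Finset.sum_eq_zero fun r _ => ?_
      have hmem : (fun j => y' r j - y r j) ∈ stoichSpan y y' :=
        Submodule.subset_span ⟨r, rfl⟩
      rw [hω.1 i' _ hmem, mul_zero]
    have hsingle : ∑ j, ω i' j * x j = x i := by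
      rw [Finset.sum_eq_single_of_mem i (Finset.mem_univ i)]
      · rw [hω.2.2.2.1 i' i rfl, one_mul]
      · intro j _ hji
        by_cases hj : (j : ℕ) < d
        · rw [hω.2.2.2.2 i' j hj (fun hc => hji (Fin.ext hc)), zero_mul]
        · rw [hxj, hbot j (le_of_not_gt hj), mul_zero]
    change x i = 0
    rw [← hsingle, horth]
  · exact hbot i (le_of_not_gt h)
lemma sign_log_sub {x y : ℝ} (hx : 0 < x) (hy : 0 < y) :
    Real.sign (Real.log x - Real.log y) = Real.sign (x - y) := by
  rcases lt_trichotomy x y with h | h | h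
  · rw [Real.sign_of_neg (sub_neg.mpr (Real.log_lt_log hx h)),
      Real.sign_of_neg (sub_neg.mpr h)]
  · rw [h]; simp
  · rw [Real.sign_of_pos (sub_pos.mpr (Real.log_lt_log hy h)),
      Real.sign_of_pos (sub_pos.mpr h)]

lemma rpow_diff {n : ℕ} {a b : Fin n → ℝ} (ha : ∀ i, 0 < a i) (hb : ∀ i, 0 < b i)
    (w : Fin n → ℝ) :
    (∏ j, a j ^ w j) - (∏ j, b j ^ w j)
      = Real.exp (∑ j, w j * Real.log (b j)) *
        ((∑ j, w j * (Real.log (a j) - Real.log (b j))) *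
          hfun (∑ j, w j * (Real.log (a j) - Real.log (b j)))) := by
  have hAB : ∑ j, w j * (Real.log (a j) - Real.log (b j))
      = (∑ j, w j * Real.log (a j)) - ∑ j, w j * Real.log (b j) := by
    rw [← Finset.sum_sub_distrib]
    exact Finset.sum_congr rfl fun j _ => by ring
  rw [prod_rpow_eq_exp ha, prod_rpow_eq_exp hb, ← exp_sub_one_eq, hAB,
    mul_sub, mul_one, ← Real.exp_add]
  ring_nf

lemma plf_sub {n m : ℕ} (y y' : Fin m → Fin n → ℝ) (κ : Fin m → ℝ)
    (v : Fin m → Fin n → ℝ) {a b : Fin n → ℝ} (ha : Pos a) (hb : Pos b) (i : Fin n) :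
    plf y y' κ v a i - plf y y' κ v b i
      = ∑ r, κ r * Real.exp (∑ j, v r j * Real.log (b j)) *
          ((∑ j, v r j * (Real.log (a j) - Real.log (b j))) *
            hfun (∑ j, v r j * (Real.log (a j) - Real.log (b j)))) * (y' r i - y r i) := by
  unfold plf
  rw [← Finset.sum_sub_distrib]
  refine Finset.sum_congr rfl fun r _ => ?_
  rw [← sub_mul, ← mul_sub, rpow_diff ha hb]
  ring

lemma inj_of_det_ne {n m : ℕ} {y y' : Fin m → Fin n → ℝ} {d : ℕ}
    {ω : Fin d → Fin n → ℝ} (hω : IsReducedBasis d (stoichSpan y y') ω)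
    {I : Fin m → Fin n → ℝ}
    (hdet : ∀ v, InSigma I v → (Mt y y' d ω v).det ≠ 0)
    (v : Fin m → Fin n → ℝ) (hv : InSigma I v) : InjOverPL y y' v := by
  classical
  intro κ hκ a b ha hb hab hΓ hplf
  set μ : Fin n → ℝ := fun j => Real.log (a j) - Real.log (b j) with hμ
  have hμj : ∀ j, μ j = Real.log (a j) - Real.log (b j) := fun _ => rfl
  set ν : Fin n → ℝ := fun j => a j - b j with hνdef
  have hνj : ∀ j, ν j = a j - b j := fun _ => rfl
  have hν0 : ν ≠ 0 := by
    intro h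
    apply hab
    funext j
    have := congrFun h j
    simp only [hνj, Pi.zero_apply] at this
    linarith [congrFun h j, (rfl : ν j = a j - b j)]
  have hsign : ∀ j, Real.sign (μ j) = Real.sign (ν j) := fun j => sign_log_sub (ha j) (hb j)
  have hν0μ : ∀ j, ν j = 0 → μ j = 0 := by
    intro j hj
    have : Real.sign (μ j) = 0 := by rw [hsign j, hj, Real.sign_zero]
    exact Real.sign_eq_zero_iff.mp this
  set e : Fin n → ℝ := fun j => if ν j = 0 then 1 else μ j / ν j with hedef
  have hepos : ∀ j, 0 < e j := by
    intro j
    show 0 < if ν j = 0 then 1 else μ j / ν j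
    split_ifs with h
    · norm_num
    · rcases lt_or_gt_of_ne h with h' | h'
      · exact div_pos_of_neg_of_neg (neg_of_sign_eq (hsign j).symm h') h'
      · exact div_pos (pos_of_sign_eq (hsign j).symm h') h'
  have heν : ∀ j, e j * ν j = μ j := by
    intro j
    show (if ν j = 0 then 1 else μ j / ν j) * ν j = μ j
    split_ifs with h
    · rw [h, mul_zero, hν0μ j h]
    · exact div_mul_cancel₀ _ h
  set g : Fin m → ℝ := fun r =>
    κ r * Real.exp (∑ j, v r j * Real.log (b j)) * hfun (∑ j, v r j * μ j) with hgdef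
  have hgpos : ∀ r, 0 < g r := fun r =>
    mul_pos (mul_pos (hκ r) (Real.exp_pos _)) (hfun_pos _)
  set v'' : Fin m → Fin n → ℝ := fun r j => g r * (e j * v r j) with hv''def
  have hv'' : InSigma I v'' := by
    intro r j
    show Real.sign (g r * (e j * v r j)) = I r j
    rw [sign_pos_mul _ _ (hgpos r), sign_pos_mul _ _ (hepos j)]
    exact hv r j
  have hdot : ∀ r, (∑ j, v'' r j * ν j) = g r * ∑ j, v r j * μ j := by
    intro r
    rw [Finset.mul_sum]
    refine Finset.sum_congr rfl fun j _ => ?_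
    show g r * (e j * v r j) * ν j = g r * (v r j * μ j)
    rw [← heν j]
    ring
  have hzero : ∀ i, ∑ r, (∑ j, v'' r j * ν j) * (y' r i - y r i) = 0 := by
    intro i
    have heq : ∑ r, (∑ j, v'' r j * ν j) * (y' r i - y r i)
        = plf y y' κ v a i - plf y y' κ v b i := by
      rw [plf_sub y y' κ v ha hb i]
      refine Finset.sum_congr rfl fun r _ => ?_
      have hsum : ∑ j, v r j * (Real.log (a j) - Real.log (b j)) = ∑ j, v r j * μ j :=
        Finset.sum_congr rfl fun j _ => by rw [hμj]
      rw [hdot r, hsum]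
      show g r * (∑ j, v r j * μ j) * (y' r i - y r i)
          = κ r * Real.exp (∑ j, v r j * Real.log (b j)) *
            ((∑ j, v r j * μ j) * hfun (∑ j, v r j * μ j)) * (y' r i - y r i)
      rw [hgdef]
      ring
    rw [heq, hplf, sub_self]
  have hνΓ : ν ∈ stoichSpan y y' := by
    have : ν = a - b := by funext j; rw [hνj]; rfl
    rw [this]; exact hΓ
  have hker : (Mt y y' d ω v'').mulVec ν = 0 := by
    funext i
    rw [Mt_mulVec]
    by_cases h : (i : ℕ) < d
    · rw [dif_pos h]
      have := hω.1 ⟨(i : ℕ), h⟩ ν hνΓ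
      simpa using this
    · rw [dif_neg h]
      simpa using hzero i
  exact hdet v'' hv'' (Matrix.exists_mulVec_eq_zero_iff.mp ⟨ν, hν0, hker⟩)
lemma exists_noninj {n m : ℕ} {y y' : Fin m → Fin n → ℝ} {d : ℕ} (hdn : d ≤ n)
    {ω : Fin d → Fin n → ℝ} (hω : IsReducedBasis d (stoichSpan y y') ω)
    {I : Fin m → Fin n → ℝ} {v₀ : Fin m → Fin n → ℝ} (hv₀ : InSigma I v₀)
    (hdet : (Mt y y' d ω v₀).det = 0) :
    ∃ v, InSigma I v ∧ ¬ InjOverPL y y' v := by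
  classical
  obtain ⟨ν, hν0, hker⟩ := Matrix.exists_mulVec_eq_zero_iff.mpr hdet
  have htop : ∀ i : Fin d, ∑ j, ω i j * ν j = 0 := by
    intro i
    have hlt : (i : ℕ) < n := lt_of_lt_of_le i.2 hdn
    have := congrFun hker ⟨(i : ℕ), hlt⟩
    rw [Mt_mulVec, dif_pos (show ((⟨(i : ℕ), hlt⟩ : Fin n) : ℕ) < d from i.2)] at this
    simpa using this
  have hνΓ : ν ∈ stoichSpan y y' := mem_of_orth_basis hω.2.1 htop
  have hAZ : ∀ i, ∑ r, (∑ j, v₀ r j * ν j) * (y' r i - y r i) = 0 := by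
    refine AZ_vanish hω _ (fun i hi => ?_) 
    have := congrFun hker i
    rw [Mt_mulVec, dif_neg (not_lt.mpr hi)] at this
    simpa using this
  set b : Fin n → ℝ := fun j => 1 + |ν j| with hbdef
  set a : Fin n → ℝ := fun j => b j + ν j with hadef
  have hbpos : Pos b := fun j => by
    show 0 < 1 + |ν j|
    positivity
  have hapos : Pos a := fun j => by
    show 0 < 1 + |ν j| + ν j
    have := neg_abs_le (ν j)
    linarith
  have habj : ∀ j, a j - b j = ν j := fun j => by show b j + ν j - b j = ν j; ring
  have hab : a ≠ b := by
    intro h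
    apply hν0
    funext j
    have := congrFun h j
    rw [Pi.zero_apply, ← habj j, this, sub_self]
  have hΓ : a - b ∈ stoichSpan y y' := by
    have : a - b = ν := by funext j; rw [Pi.sub_apply, habj j]
    rw [this]; exact hνΓ
  set μ : Fin n → ℝ := fun j => Real.log (a j) - Real.log (b j) with hμdef
  have hμj : ∀ j, μ j = Real.log (a j) - Real.log (b j) := fun _ => rfl
  have hsign : ∀ j, Real.sign (μ j) = Real.sign (ν j) := fun j => by
    rw [hμj, ← habj j]; exact sign_log_sub (hapos j) (hbpos j)
  have hν0μ : ∀ j, ν j = 0 → μ j = 0 := fun j hj =>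
    Real.sign_eq_zero_iff.mp (by rw [hsign j, hj, Real.sign_zero])
  have hμne : ∀ j, ν j ≠ 0 → μ j ≠ 0 := by
    intro j hj h0
    have : Real.sign (ν j) = 0 := by rw [← hsign j, h0, Real.sign_zero]
    exact hj (Real.sign_eq_zero_iff.mp this)
  set e : Fin n → ℝ := fun j => if ν j = 0 then 1 else ν j / μ j with hedef
  have hepos : ∀ j, 0 < e j := by
    intro j
    show 0 < if ν j = 0 then 1 else ν j / μ j
    split_ifs with h
    · norm_num
    · rcases lt_or_gt_of_ne h with h' | h'
      · exact div_pos_of_neg_of_neg h' (neg_of_sign_eq (hsign j).symm h')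
      · exact div_pos h' (pos_of_sign_eq (hsign j).symm h')
  have heμ : ∀ j, e j * μ j = ν j := by
    intro j
    show (if ν j = 0 then 1 else ν j / μ j) * μ j = ν j
    split_ifs with h
    · rw [hν0μ j h, mul_zero, h]
    · exact div_mul_cancel₀ _ (hμne j h)
  set v' : Fin m → Fin n → ℝ := fun r j => e j * v₀ r j with hv'def
  have hv' : InSigma I v' := by
    intro r j
    show Real.sign (e j * v₀ r j) = I r j
    rw [sign_pos_mul _ _ (hepos j)]
    exact hv₀ r j
  set t : Fin m → ℝ := fun r => ∑ j, v₀ r j * ν j with htdef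
  have htj : ∀ r, t r = ∑ j, v₀ r j * ν j := fun _ => rfl
  have hdot : ∀ r, ∑ j, v' r j * μ j = t r := by
    intro r
    rw [htj]
    refine Finset.sum_congr rfl fun j _ => ?_
    show e j * v₀ r j * μ j = v₀ r j * ν j
    rw [← heμ j]
    ring
  set κ : Fin m → ℝ := fun r =>
    if t r = 0 then 1
    else t r / (Real.exp (∑ j, v' r j * Real.log (b j)) * (Real.exp (t r) - 1)) with hκdef
  have hκj : ∀ r, κ r = if t r = 0 then 1
      else t r / (Real.exp (∑ j, v' r j * Real.log (b j)) * (Real.exp (t r) - 1)) :=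
    fun _ => rfl
  have hκpos : ∀ r, 0 < κ r := by
    intro r
    rw [hκj]
    split_ifs with h
    · norm_num
    · rw [exp_sub_one_eq]
      have h1 : Real.exp (∑ j, v' r j * Real.log (b j)) * (t r * hfun (t r))
          = t r * (Real.exp (∑ j, v' r j * Real.log (b j)) * hfun (t r)) := by ring
      rw [h1, div_mul_cancel_left₀ h]
      exact inv_pos.mpr (mul_pos (Real.exp_pos _) (hfun_pos _))
  have hterm : ∀ r, κ r * Real.exp (∑ j, v' r j * Real.log (b j)) * (t r * hfun (t r))
      = t r := by
    intro r
    rcases eq_or_ne (t r) 0 with h | h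
    · rw [h]; ring
    · rw [hκj, if_neg h, exp_sub_one_eq]
      have hE : Real.exp (∑ j, v' r j * Real.log (b j)) ≠ 0 := (Real.exp_pos _).ne'
      have hh : hfun (t r) ≠ 0 := (hfun_pos (t r)).ne'
      field_simp
  have hplf : plf y y' κ v' a = plf y y' κ v' b := by
    funext i
    have hsub := plf_sub y y' κ v' hapos hbpos i
    have hsum : ∀ r, ∑ j, v' r j * (Real.log (a j) - Real.log (b j)) = t r := by
      intro r
      rw [← hdot r]

    have hz : plf y y' κ v' a i - plf y y' κ v' b i = 0 := by
      rw [hsub]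
      have hterm' : ∀ r, κ r * Real.exp (∑ j, v' r j * Real.log (b j)) *
          ((∑ j, v' r j * (Real.log (a j) - Real.log (b j))) *
            hfun (∑ j, v' r j * (Real.log (a j) - Real.log (b j)))) * (y' r i - y r i)
          = t r * (y' r i - y r i) := by
        intro r
        rw [hsum r, hterm r]
      rw [Finset.sum_congr rfl fun r _ => hterm' r]
      exact hAZ i
    linarith [hz]
  exact ⟨v', hv', fun hinj => (hinj κ hκpos a b hapos hbpos hab hΓ) hplf⟩
lemma sign_det_const {n m : ℕ} (y y' : Fin m → Fin n → ℝ) (d : ℕ) (ω : Fin d → Fin n → ℝ)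
    {I : Fin m → Fin n → ℝ}
    (hdet : ∀ v, InSigma I v → (Mt y y' d ω v).det ≠ 0) :
    SignedDet y y' d ω I := by
  intro v w hv hw
  classical
  set φ : ℝ → ℝ := fun u => (Mt y y' d ω (fun r j => (1 - u) * v r j + u * w r j)).det
    with hφdef
  have hφcont : Continuous φ := by
    apply Continuous.matrix_det
    apply continuous_matrix
    intro i j
    simp only [Mt, tildeMat, Matrix.of_apply]
    by_cases h : (i : ℕ) < d
    · simp only [dif_pos h]
      exact continuous_const
    · simp only [dif_neg h, Matrix.mul_apply, stoich, Zmat, Matrix.of_apply]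
      refine continuous_finset_sum _ fun r _ => ?_
      fun_prop
  have hmem : ∀ u ∈ Set.Icc (0 : ℝ) 1,
      InSigma I (fun r j => (1 - u) * v r j + u * w r j) := by
    intro u hu r j
    have h : Real.sign (v r j) = Real.sign (w r j) := by rw [hv r j, hw r j]
    rw [sign_seg h hu.1 hu.2]
    exact hv r j
  have hne : ∀ u ∈ Set.Icc (0 : ℝ) 1, φ u ≠ 0 := fun u hu => hdet _ (hmem u hu)
  have hφ0 : φ 0 = (Mt y y' d ω v).det := by
    have : (fun r j => (1 - (0 : ℝ)) * v r j + 0 * w r j) = v := by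
      funext r j; ring
    rw [hφdef]; simp only [this]
  have hφ1 : φ 1 = (Mt y y' d ω w).det := by
    have : (fun r j => (1 - (1 : ℝ)) * v r j + 1 * w r j) = w := by
      funext r j; ring
    rw [hφdef]; simp only [this]
  rcases (hdet v hv).lt_or_gt with h1 | h1 <;> rcases (hdet w hw).lt_or_gt with h2 | h2
  · rw [Real.sign_of_neg h1, Real.sign_of_neg h2]
  · exfalso
    have h0mem : (0 : ℝ) ∈ Set.Icc (φ 0) (φ 1) := by
      rw [hφ0, hφ1]; exact ⟨h1.le, h2.le⟩
    obtain ⟨u, hu, hu0⟩ := intermediate_value_Icc (by norm_num : (0:ℝ) ≤ 1)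
      hφcont.continuousOn h0mem
    exact hne u hu hu0
  · exfalso
    have h0mem : (0 : ℝ) ∈ Set.Icc (φ 1) (φ 0) := by
      rw [hφ0, hφ1]; exact ⟨h2.le, h1.le⟩
    obtain ⟨u, hu, hu0⟩ := intermediate_value_Icc' (by norm_num : (0:ℝ) ≤ 1)
      hφcont.continuousOn h0mem
    exact hne u hu hu0
  · rw [Real.sign_of_pos h1, Real.sign_of_pos h2]
/-- Proposition `openpos2`. -/
theorem stmt7 {n m s : ℕ} (d : ℕ) (hd : d = n - s)
    (y y' : Fin m → Fin n → ℝ)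
    (hs : Module.finrank ℝ (stoichSpan y y') = s)
    (ω : Fin d → Fin n → ℝ)
    (hω : IsReducedBasis d (stoichSpan y y') ω)
    (I : Fin m → Fin n → ℝ) (hI : IsInfluence I) :
    (∀ v, InSigma I v → InjOverPL y y' v) ↔ IsSNS y y' d ω I := by
  have hdn : d ≤ n := hd ▸ Nat.sub_le n s
  constructor
  · intro H
    have hdetne : ∀ v, InSigma I v → (Mt y y' d ω v).det ≠ 0 := by
      intro v hv hzero
      obtain ⟨v', hv', hninj⟩ := exists_noninj hdn hω hv hzero
      exact hninj (H v' hv')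
    exact ⟨sign_det_const y y' d ω hdetne, hdetne⟩
  · intro hsns v hv
    exact inj_of_det_ne hω hsns.2 v hv
end CRN
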